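/- Let ι be a finite type, and let φ, φ' ∈ ℓ²(ι, ℂ) (i.e., EuclideanSpace over ι) be unit vectors with ⟨φ, φ'⟩ = 0. Let 0 ≤ ε̃ ≤ ε < 1 and define ψ := sqrt(1 − ε̃)·φ + sqrt(ε̃)·φ'. Define Ψ : ι × {0,1} → ℂ by Ψ(i, 0) := sqrt((1 − ε)/(1 − ε̃))·ψ(i) and Ψ(i, 1) := sqrt((ε − ε̃)/(1 − ε̃))·ψ(i), and define Φ : ι × {0,1} → ℂ by Φ(i, 0) := φ(i), Φ(i, 1) := 0. Then, in the Euclidean inner product space over ι × {0,1}: Ψ and Φ are unit vectors, ⟨Φ, Ψ⟩ = sqrt(1 − ε), and there exists a unit vector Φ⊥ with ⟨Φ, Φ⊥⟩ = 0 such that Ψ = sqrt(1 − ε)·Φ + sqrt(ε)·Φ⊥. (Fictitious-system step in the proof of Lemma 1: attaching an extra two-dimensional factor converts a decomposition with actual weight ε̃ ≤ ε into one with exactly the worst-case weight ε.) -/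

import Mathlib

open scoped ComplexInnerProductSpace

/-- Fictitious-system step in the proof of Lemma 1: attaching an extra two-dimensional
factor (modelled by the index type `ι × Fin 2`) converts a decomposition
`ψ = sqrt(1 − ε̃) φ + sqrt(ε̃) φ'` with actual weight `ε̃ ≤ ε` into one with exactly the
worst-case weight `ε`: the vectors `Ψ` and `Φ` defined componentwise below are unit
vectors with `⟪Φ, Ψ⟫ = sqrt(1 − ε)`, and `Ψ = sqrt(1 − ε) Φ + sqrt(ε) Φ⊥` for some unit
vector `Φ⊥` orthogonal to `Φ`. -/
theorem fictitious_system_step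
    {ι : Type*} [Fintype ι]
    (φ φ' : EuclideanSpace ℂ ι) (hφ : ‖φ‖ = 1) (hφ' : ‖φ'‖ = 1)
    (horth : ⟪φ, φ'⟫ = 0)
    (εt ε : ℝ) (h0 : 0 ≤ εt) (h1 : εt ≤ ε) (h2 : ε < 1)
    (ψ : EuclideanSpace ℂ ι)
    (hψ : ψ = ((Real.sqrt (1 - εt) : ℝ) : ℂ) • φ + ((Real.sqrt εt : ℝ) : ℂ) • φ')
    (Ψ Φ : EuclideanSpace ℂ (ι × Fin 2))
    (hΨ0 : ∀ i, Ψ (i, 0) = ((Real.sqrt ((1 - ε) / (1 - εt)) : ℝ) : ℂ) * ψ i)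
    (hΨ1 : ∀ i, Ψ (i, 1) = ((Real.sqrt ((ε - εt) / (1 - εt)) : ℝ) : ℂ) * ψ i)
    (hΦ0 : ∀ i, Φ (i, 0) = φ i)
    (hΦ1 : ∀ i, Φ (i, 1) = 0) :
    ‖Ψ‖ = 1 ∧ ‖Φ‖ = 1 ∧ ⟪Φ, Ψ⟫ = ((Real.sqrt (1 - ε) : ℝ) : ℂ) ∧
      ∃ Φperp : EuclideanSpace ℂ (ι × Fin 2), ‖Φperp‖ = 1 ∧ ⟪Φ, Φperp⟫ = 0 ∧
        Ψ = ((Real.sqrt (1 - ε) : ℝ) : ℂ) • Φ + ((Real.sqrt ε : ℝ) : ℂ) • Φperp := by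
  have hεt1 : (0:ℝ) < 1 - εt := by linarith
  have hε1 : (0:ℝ) ≤ 1 - ε := by linarith
  have hεεt : (0:ℝ) ≤ ε - εt := by linarith
  -- inner products on the small space
  have hφφ : ⟪φ, φ⟫ = 1 := by
    rw [@inner_self_eq_norm_sq_to_K ℂ, hφ]; norm_num
  have hφ'φ' : ⟪φ', φ'⟫ = 1 := by
    rw [@inner_self_eq_norm_sq_to_K ℂ, hφ']; norm_num
  have horth' : ⟪φ', φ⟫ = 0 := by
    rw [← inner_conj_symm, horth, map_zero]
  have hφψ : ⟪φ, ψ⟫ = ((Real.sqrt (1 - εt) : ℝ) : ℂ) := by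
    rw [hψ, inner_add_right, inner_smul_right, inner_smul_right, hφφ, horth]
    ring
  have hψψ : ⟪ψ, ψ⟫ = 1 := by
    rw [hψ]
    simp only [inner_add_left, inner_add_right, inner_smul_left, inner_smul_right,
      hφφ, hφ'φ', horth, horth', Complex.conj_ofReal, mul_zero, mul_one, add_zero, zero_add]
    rw [← Complex.ofReal_mul, ← Complex.ofReal_mul,
      Real.mul_self_sqrt (le_of_lt hεt1), Real.mul_self_sqrt h0]
    push_cast
    ring
  -- inner product on the big space as a sum
  have key : ∀ (x y : EuclideanSpace ℂ (ι × Fin 2)), ⟪x, y⟫ =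
      ∑ i, ((starRingEnd ℂ) (x (i,0)) * y (i,0) + (starRingEnd ℂ) (x (i,1)) * y (i,1)) := by
    intro x y
    simp [PiLp.inner_apply, Fintype.sum_prod_type, Fin.sum_univ_two, RCLike.inner_apply]
    exact Finset.sum_congr rfl (fun i _ => by ring)
  have hsmall : ∀ (x y : EuclideanSpace ℂ ι),
      (∑ i, (starRingEnd ℂ) (x i) * y i) = ⟪x, y⟫ := by
    intro x y
    simp [PiLp.inner_apply, RCLike.inner_apply]
    exact Finset.sum_congr rfl (fun i _ => by ring)
  have hΦΦ : ⟪Φ, Φ⟫ = 1 := by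
    rw [key]
    simp only [hΦ0, hΦ1, map_zero, mul_zero, add_zero]
    rw [hsmall, hφφ]
  have hΦΨ : ⟪Φ, Ψ⟫ = ((Real.sqrt (1 - ε) : ℝ) : ℂ) := by
    rw [key]
    simp only [hΦ0, hΦ1, hΨ0, map_zero, zero_mul, add_zero]
    have : (∑ i, (starRingEnd ℂ) (φ i) * (((Real.sqrt ((1 - ε) / (1 - εt)) : ℝ) : ℂ) * ψ i))
        = ((Real.sqrt ((1 - ε) / (1 - εt)) : ℝ) : ℂ) * ∑ i, (starRingEnd ℂ) (φ i) * ψ i := by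
      rw [Finset.mul_sum]; congr 1; ext i; ring
    rw [this, hsmall, hφψ, ← Complex.ofReal_mul, ← Real.sqrt_mul (by positivity),
      div_mul_cancel₀ _ (ne_of_gt hεt1)]
  have hΨΨ : ⟪Ψ, Ψ⟫ = 1 := by
    rw [key]
    simp only [hΨ0, hΨ1, map_mul, Complex.conj_ofReal]
    have : (∑ i, (((Real.sqrt ((1 - ε) / (1 - εt)) : ℝ) : ℂ) * (starRingEnd ℂ) (ψ i) *
          (((Real.sqrt ((1 - ε) / (1 - εt)) : ℝ) : ℂ) * ψ i) +
        ((Real.sqrt ((ε - εt) / (1 - εt)) : ℝ) : ℂ) * (starRingEnd ℂ) (ψ i) *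
          (((Real.sqrt ((ε - εt) / (1 - εt)) : ℝ) : ℂ) * ψ i)))
        = (((Real.sqrt ((1 - ε) / (1 - εt)) : ℝ) : ℂ) * ((Real.sqrt ((1 - ε) / (1 - εt)) : ℝ) : ℂ)
          + ((Real.sqrt ((ε - εt) / (1 - εt)) : ℝ) : ℂ) * ((Real.sqrt ((ε - εt) / (1 - εt)) : ℝ) : ℂ))
          * ∑ i, (starRingEnd ℂ) (ψ i) * ψ i := by
      rw [Finset.mul_sum]; congr 1; ext i; ring
    rw [this, hsmall, hψψ, mul_one, ← Complex.ofReal_mul, ← Complex.ofReal_mul,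
      Real.mul_self_sqrt (by positivity), Real.mul_self_sqrt (by positivity),
      ← Complex.ofReal_add, ← add_div]
    rw [show (1 - ε + (ε - εt)) = 1 - εt by ring, div_self (ne_of_gt hεt1)]
    norm_num
  have normone : ∀ (x : EuclideanSpace ℂ (ι × Fin 2)), ⟪x, x⟫ = 1 → ‖x‖ = 1 := by
    intro x h
    have := @norm_eq_sqrt_re_inner ℂ _ _ _ _ x
    rw [h] at this
    simpa using this
  refine ⟨normone Ψ hΨΨ, normone Φ hΦΦ, hΦΨ, ?_⟩
  rcases eq_or_lt_of_le (le_trans h0 h1) with hε0 | hε0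
  · -- ε = 0, hence εt = 0, Ψ = Φ
    have hεt0 : εt = 0 := le_antisymm (hε0 ▸ h1) h0
    have hΨΦ : Ψ = Φ := by
      have hψφ : ψ = φ := by
        rw [hψ, hεt0]; simp
      ext p
      rcases p with ⟨i, j⟩
      fin_cases j
      · show Ψ (i, 0) = Φ (i, 0)
        rw [hΨ0, hΦ0, hψφ, ← hε0, hεt0]; simp
      · show Ψ (i, 1) = Φ (i, 1)
        rw [hΨ1, hΦ1, ← hε0, hεt0]; simp
    set X : EuclideanSpace ℂ (ι × Fin 2) :=
      WithLp.toLp 2 (fun p : ι × Fin 2 => (Fin.cases (0:ℂ) (fun _ => φ p.1) p.2 : ℂ)) with hXdef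
    have hX0 : ∀ i : ι, X (i, 0) = 0 := fun i => rfl
    have hX1 : ∀ i : ι, X (i, 1) = φ i := fun i => rfl
    refine ⟨X, ?_, ?_, ?_⟩
    · refine normone X ?_
      rw [key]
      simp only [hX0, hX1, map_zero, zero_mul, zero_add]
      rw [hsmall, hφφ]
    · rw [key]
      simp only [hX0, hX1, hΦ1, map_zero, mul_zero, zero_mul, add_zero]
      exact Finset.sum_const_zero
    · rw [hΨΦ, ← hε0]
      simp
  · -- ε > 0
    set s : ℂ := ((Real.sqrt ε : ℝ) : ℂ) with hs
    have hsne : s ≠ 0 := by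
      simp [hs, Complex.ofReal_ne_zero, Real.sqrt_ne_zero', hε0]
    set Φperp : EuclideanSpace ℂ (ι × Fin 2) :=
      s⁻¹ • (Ψ - ((Real.sqrt (1 - ε) : ℝ) : ℂ) • Φ) with hP
    have hΨΦ : ⟪Ψ, Φ⟫ = ((Real.sqrt (1 - ε) : ℝ) : ℂ) := by
      rw [← inner_conj_symm, hΦΨ, Complex.conj_ofReal]
    have hinner : ⟪Φperp, Φperp⟫ = 1 := by
      rw [hP]
      simp only [inner_smul_left, inner_smul_right, inner_sub_left, inner_sub_right,
        inner_smul_left, inner_smul_right, hΨΨ, hΦΦ, hΦΨ, hΨΦ, Complex.conj_ofReal, map_inv₀]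
      have hss : (starRingEnd ℂ) s = s := by rw [hs, Complex.conj_ofReal]
      rw [hss]
      have hs2 : s * s = (ε : ℂ) := by
        rw [hs, ← Complex.ofReal_mul, Real.mul_self_sqrt (le_of_lt hε0)]
      have h1ε : ((Real.sqrt (1-ε) : ℝ) : ℂ) * ((Real.sqrt (1-ε) : ℝ) : ℂ) = ((1-ε : ℝ) : ℂ) := by
        rw [← Complex.ofReal_mul, Real.mul_self_sqrt hε1]
      field_simp
      rw [sq, sq, hs2, h1ε]
      push_cast
      ring
    have hΦperp : ⟪Φ, Φperp⟫ = 0 := by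
      rw [hP, inner_smul_right, inner_sub_right, inner_smul_right, hΦΨ, hΦΦ, mul_one, sub_self,
        mul_zero]
    refine ⟨Φperp, normone Φperp hinner, hΦperp, ?_⟩
    rw [hP, smul_smul, mul_inv_cancel₀ hsne, one_smul]
    abel
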